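/- Let n ≥ 1, Q, Q̃ ∈ [0,1], and let E_{a,b,c} be Eve's (unnormalized) states of the depolarizing-channel dilation. Then all these states are mutually orthogonal except for the pair (E_{0,0⃗,0⃗}, E_{1,1⃗,1⃗}): for all triples (a,b,c) ≠ (a',b',c') in {0,1} × {0,1}^n × {0,1}^n such that {(a,b,c),(a',b',c')} ≠ {(0,0⃗,0⃗),(1,1⃗,1⃗)}, one has ⟨E_{a,b,c}, E_{a',b',c'}⟩ = 0. -/

import Mathlib

open scoped BigOperators

/-- The index type for `ℂ^{2^n} ⊗ ℂ^{2^n} ⊗ ℂ^{2^n} ⊗ ℂ^{2^n} ⊗ ℂ² ⊗ ℂ²`. -/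
abbrev EveIdx (n : ℕ) :=
  (Fin n → Bool) × (Fin n → Bool) × (Fin n → Bool) × (Fin n → Bool) × Bool × Bool

/-- The constant bit string `a⃗ = (a,…,a) ∈ {0,1}^n`. -/
def constStr (n : ℕ) (a : Bool) : Fin n → Bool := fun _ => a

instance eveIdxDecEq (n : ℕ) : DecidableEq (EveIdx n) := instDecidableEqProd

/-- Eve's (unnormalized) state `E_{a,b,c}` of the depolarizing-channel dilation:
`E_{a,b,c} = 2^{−(2n+1)/2} [ δ_{b,a⃗} δ_{c,b} √((1−Q)(1−Q̃)) (Σ_i |i i⟩)⊗(Σ_k |k k⟩)⊗|0 0⟩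
 + δ_{c,b} √(Q(1−Q̃)) |a⃗ b⟩⊗(Σ_k |k k⟩)⊗|1 0⟩
 + δ_{b,a⃗} √((1−Q)Q̃) (Σ_i |i i⟩)⊗|b c⟩⊗|0 1⟩
 + √(Q Q̃) |a⃗ b⟩⊗|b c⟩⊗|1 1⟩ ]`. -/
noncomputable def eveVec (n : ℕ) (Q Qt : ℝ) (a : Bool) (b c : Fin n → Bool) :
    EuclideanSpace ℂ (EveIdx n) :=
  ((Real.sqrt (2 ^ (2 * n + 1)) : ℝ) : ℂ)⁻¹ •
    ((if b = constStr n a ∧ c = b then ((Real.sqrt ((1 - Q) * (1 - Qt)) : ℝ) : ℂ) else 0) •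
        (∑ i : Fin n → Bool, ∑ k : Fin n → Bool,
          EuclideanSpace.single (i, i, k, k, false, false) (1 : ℂ)) +
      (if c = b then ((Real.sqrt (Q * (1 - Qt)) : ℝ) : ℂ) else 0) •
        (∑ k : Fin n → Bool,
          EuclideanSpace.single (constStr n a, b, k, k, true, false) (1 : ℂ)) +
      (if b = constStr n a then ((Real.sqrt ((1 - Q) * Qt) : ℝ) : ℂ) else 0) •
        (∑ i : Fin n → Bool,
          EuclideanSpace.single (i, i, b, c, false, true) (1 : ℂ)) +
      ((Real.sqrt (Q * Qt) : ℝ) : ℂ) •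
        EuclideanSpace.single (constStr n a, b, b, c, true, true) (1 : ℂ))

lemma ite_ite_same {α : Type*} (p : Prop) [Decidable p] (a b : α) :
    (if p then (if p then a else b) else b) = if p then a else b := by
  split <;> rfl

lemma sum_if_const {ι α : Type*} [Fintype ι] [AddCommMonoid α] (p : Prop) [Decidable p]
    (f : ι → α) : ∑ x : ι, (if p then f x else 0) = if p then ∑ x : ι, f x else 0 := by
  split <;> simp

set_option maxHeartbeats 2000000 in
/-- All of Eve's states are mutually orthogonal, apart from the pair
`(E_{0,0⃗,0⃗}, E_{1,1⃗,1⃗})`. -/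
theorem eveVec_orthogonal (n : ℕ) (hn : 1 ≤ n) (Q Qt : ℝ)
    (hQ0 : 0 ≤ Q) (hQ1 : Q ≤ 1) (hQt0 : 0 ≤ Qt) (hQt1 : Qt ≤ 1)
    (a a' : Bool) (b c b' c' : Fin n → Bool)
    (hne : (a, b, c) ≠ (a', b', c'))
    (hex1 : ¬((a, b, c) = (false, constStr n false, constStr n false) ∧
              (a', b', c') = (true, constStr n true, constStr n true)))
    (hex2 : ¬((a, b, c) = (true, constStr n true, constStr n true) ∧
              (a', b', c') = (false, constStr n false, constStr n false))) :
    (inner ℂ (eveVec n Q Qt a b c) (eveVec n Q Qt a' b' c') : ℂ) = 0 := by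
  have hinj : ∀ x y : Bool, constStr n x = constStr n y → x = y := fun x y h =>
    congrFun h ⟨0, hn⟩
  have K1 : ¬((b' = constStr n a' ∧ c' = b') ∧ (b = constStr n a ∧ c = b)) := by
    rintro ⟨⟨hb', hc'⟩, hb, hc⟩
    subst hc' hc hb' hb
    cases a <;> cases a' <;> simp_all [Prod.ext_iff]
  have K2 : ¬(c' = b' ∧ c = b ∧ constStr n a = constStr n a' ∧ b = b') := by
    rintro ⟨hc', hc, ha, hb⟩
    exact hne (by rw [hinj a a' ha, hb, hc, hb, hc'])
  have K3 : ¬(b = b' ∧ c = c' ∧ b' = constStr n a' ∧ b = constStr n a) := by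
    rintro ⟨hb, hc, hb', hbb⟩
    exact hne (by rw [hinj a a' (hbb ▸ hb ▸ hb'.symm ▸ rfl), hb, hc])
  have K4 : ¬(constStr n a = constStr n a' ∧ b = b' ∧ c = c') := by
    rintro ⟨ha, hb, hc⟩
    exact hne (by rw [hinj a a' ha, hb, hc])
  simp only [eveVec, inner_smul_left, inner_smul_right, inner_add_left, inner_add_right,
    sum_inner, inner_sum, EuclideanSpace.inner_single_left, EuclideanSpace.single_apply,
    Prod.mk.injEq, map_one, one_mul, mul_ite, mul_zero, mul_one, ite_and, reduceIte,
    Bool.false_eq_true, Bool.true_eq_false, if_false, if_true, ite_true, ite_false,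
    Finset.sum_const_zero, Finset.sum_ite_eq, Finset.sum_ite_eq', Finset.mem_univ,
    mul_zero, zero_mul, add_zero, zero_add, ite_ite_same, ite_self, sum_if_const, map_zero,
    Finset.sum_const, Finset.card_univ, nsmul_eq_mul, Complex.conj_ofReal]
  clear hne hex1 hex2 hinj hQt0 hQt1 hQ0 hQ1 hn
  split_ifs <;> simp_all
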